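/- The blow-up time function u ↦ T*(u) is continuous on the set 𝒫 = {u ∈ ℝ^m × Ker A^D : T*(u) < ∞}. -/

import Mathlib

open Filter Topology

noncomputable section

/-- `g_i(w) = (1/2) wᵀ π_i w + (A^C w)_i`. -/
def gfun {m n : ℕ} (π : Fin m → Matrix (Fin n) (Fin n) ℝ)
    (AC : Matrix (Fin m) (Fin n) ℝ) (w : Fin n → ℝ) (i : Fin m) : ℝ :=
  (1 / 2) * (∑ j, ∑ k, w j * π i j k * w k) + ∑ j, AC i j * w j

/-- `f_i(v,w) = (1/2) v_i² 1_{i∈I} + Σ_{k ≤ i} A^V_{ik} v_k + g_i(w)`. -/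
def fRic {m n : ℕ} (I : Finset (Fin m)) (AV : Matrix (Fin m) (Fin m) ℝ)
    (π : Fin m → Matrix (Fin n) (Fin n) ℝ) (AC : Matrix (Fin m) (Fin n) ℝ)
    (v : Fin m → ℝ) (w : Fin n → ℝ) (i : Fin m) : ℝ :=
  (1 / 2) * (v i) ^ 2 * (if i ∈ I then 1 else 0)
    + (∑ k ∈ Finset.univ.filter (fun k => k ≤ i), AV i k * v k)
    + gfun π AC w i

/-- `E(w) = {v : f_i(v,w) ≤ 0 ∀ i}`. -/
def Eset {m n : ℕ} (I : Finset (Fin m)) (AV : Matrix (Fin m) (Fin m) ℝ)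
    (π : Fin m → Matrix (Fin n) (Fin n) ℝ) (AC : Matrix (Fin m) (Fin n) ℝ)
    (w : Fin n → ℝ) : Set (Fin m → ℝ) :=
  {v | ∀ i, fRic I AV π AC v w i ≤ 0}

/-- `E°(w) = {v : f_i(v,w) < 0 ∀ i}`. -/
def EsetO {m n : ℕ} (I : Finset (Fin m)) (AV : Matrix (Fin m) (Fin m) ℝ)
    (π : Fin m → Matrix (Fin n) (Fin n) ℝ) (AC : Matrix (Fin m) (Fin n) ℝ)
    (w : Fin n → ℝ) : Set (Fin m → ℝ) :=
  {v | ∀ i, fRic I AV π AC v w i < 0}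

/-- `𝔇 = {w ∈ Ker A^D : E(w) ≠ ∅}`. -/
def Dset {m n : ℕ} (I : Finset (Fin m)) (AV : Matrix (Fin m) (Fin m) ℝ)
    (π : Fin m → Matrix (Fin n) (Fin n) ℝ) (AC : Matrix (Fin m) (Fin n) ℝ)
    (AD : Matrix (Fin n) (Fin n) ℝ) : Set (Fin n → ℝ) :=
  {w | AD.mulVec w = 0 ∧ (Eset I AV π AC w).Nonempty}

/-- `𝔇° = {w ∈ Ker A^D : E°(w) ≠ ∅}`. -/
def DsetO {m n : ℕ} (I : Finset (Fin m)) (AV : Matrix (Fin m) (Fin m) ℝ)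
    (π : Fin m → Matrix (Fin n) (Fin n) ℝ) (AC : Matrix (Fin m) (Fin n) ℝ)
    (AD : Matrix (Fin n) (Fin n) ℝ) : Set (Fin n → ℝ) :=
  {w | AD.mulVec w = 0 ∧ (EsetO I AV π AC w).Nonempty}
open scoped ENNReal

/-- `y` solves `ẏ = F(y)` on `[0,T)`. -/
def SolOn {d : ℕ} (F : (Fin d → ℝ) → (Fin d → ℝ)) (y : ℝ → Fin d → ℝ) (T : ℝ≥0∞) : Prop :=
  ∀ t : ℝ, 0 ≤ t → ENNReal.ofReal t < T → HasDerivAt y (F (y t)) t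

/-- `y` is a maximal solution of `ẏ = F(y)`, with lifetime `T`: it is a solution on `[0,T)`
and no solution with the same initial value exists on a longer interval. -/
def IsMaxSol {d : ℕ} (F : (Fin d → ℝ) → (Fin d → ℝ)) (y : ℝ → Fin d → ℝ) (T : ℝ≥0∞) : Prop :=
  0 < T ∧ SolOn F y T ∧
    ∀ (z : ℝ → Fin d → ℝ) (T' : ℝ≥0∞), T < T' → SolOn F z T' → z 0 ≠ y 0

/-- Lyapunov stability of an equilibrium point. -/
def StablePt {d : ℕ} (F : (Fin d → ℝ) → (Fin d → ℝ)) (ν : Fin d → ℝ) : Prop :=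
  ∀ ε : ℝ, 0 < ε → ∃ δ : ℝ, 0 < δ ∧ ∀ (y : ℝ → Fin d → ℝ) (T : ℝ≥0∞),
    IsMaxSol F y T → ‖y 0 - ν‖ < δ →
      ∀ t : ℝ, 0 < t → ENNReal.ofReal t < T → ‖y t - ν‖ < ε

/-- Asymptotic stability of an equilibrium point. -/
def AsympStablePt {d : ℕ} (F : (Fin d → ℝ) → (Fin d → ℝ)) (ν : Fin d → ℝ) : Prop :=
  StablePt F ν ∧ ∃ δ : ℝ, 0 < δ ∧ ∀ (y : ℝ → Fin d → ℝ) (T : ℝ≥0∞),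
    IsMaxSol F y T → ‖y 0 - ν‖ < δ → T = ⊤ ∧ Filter.Tendsto y Filter.atTop (nhds ν)

open Set

lemma abs_comp_le_norm {d : ℕ} (x : Fin d → ℝ) (i : Fin d) : |x i| ≤ ‖x‖ := by
  simpa [Real.norm_eq_abs] using norm_le_pi_norm x i

section FBounds
variable {m n : ℕ} (I : Finset (Fin m)) (AV : Matrix (Fin m) (Fin m) ℝ)
  (π : Fin m → Matrix (Fin n) (Fin n) ℝ) (AC : Matrix (Fin m) (Fin n) ℝ)

/-- total `ℓ¹`-size of `AV`. -/
noncomputable def SAV : ℝ := ∑ i, ∑ k, |AV i k|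

/-- total size of the `w`-part coefficients. -/
noncomputable def GB : ℝ := ∑ i : Fin m, ((1/2) * (∑ j, ∑ k, |π i j k|) + ∑ j, |AC i j|)

lemma SAV_nonneg : 0 ≤ SAV AV :=
  Finset.sum_nonneg fun _ _ => Finset.sum_nonneg fun _ _ => abs_nonneg _

lemma GB_nonneg : 0 ≤ GB π AC := by
  apply Finset.sum_nonneg
  intro i _
  have h1 : (0:ℝ) ≤ ∑ j, ∑ k, |π i j k| :=
    Finset.sum_nonneg fun _ _ => Finset.sum_nonneg fun _ _ => abs_nonneg _
  have h2 : (0:ℝ) ≤ ∑ j, |AC i j| := Finset.sum_nonneg fun _ _ => abs_nonneg _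
  linarith

lemma row_AV_le (i : Fin m) : ∑ k, |AV i k| ≤ SAV AV := by
  apply Finset.single_le_sum (f := fun i => ∑ k, |AV i k|)
    (fun _ _ => Finset.sum_nonneg fun _ _ => abs_nonneg _) (Finset.mem_univ i)

lemma rowconst_le (i : Fin m) :
    (1/2) * (∑ j, ∑ k, |π i j k|) + ∑ j, |AC i j| ≤ GB π AC := by
  apply Finset.single_le_sum (f := fun i => (1/2) * (∑ j, ∑ k, |π i j k|) + ∑ j, |AC i j|)
    (fun i _ => by
      have h1 : (0:ℝ) ≤ ∑ j, ∑ k, |π i j k| :=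
        Finset.sum_nonneg fun _ _ => Finset.sum_nonneg fun _ _ => abs_nonneg _
      have h2 : (0:ℝ) ≤ ∑ j, |AC i j| := Finset.sum_nonneg fun _ _ => abs_nonneg _
      linarith) (Finset.mem_univ i)

lemma gfun_bound (w : Fin n → ℝ) (i : Fin m) :
    |gfun π AC w i| ≤ GB π AC * (1 + ‖w‖)^2 := by
  have hw : 0 ≤ ‖w‖ := norm_nonneg w
  have h1 : |∑ j, ∑ k, w j * π i j k * w k| ≤ (∑ j, ∑ k, |π i j k|) * ‖w‖^2 := by
    calc |∑ j, ∑ k, w j * π i j k * w k| ≤ ∑ j, |∑ k, w j * π i j k * w k| :=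
          Finset.abs_sum_le_sum_abs _ _
      _ ≤ ∑ j, ∑ k, |w j * π i j k * w k| :=
          Finset.sum_le_sum fun j _ => Finset.abs_sum_le_sum_abs _ _
      _ ≤ ∑ j, ∑ k, |π i j k| * ‖w‖^2 := by
          apply Finset.sum_le_sum; intro j _; apply Finset.sum_le_sum; intro k _
          rw [abs_mul, abs_mul]
          calc |w j| * |π i j k| * |w k| ≤ ‖w‖ * |π i j k| * ‖w‖ := by
                apply mul_le_mul (mul_le_mul (abs_comp_le_norm w j) le_rfl (abs_nonneg _) hw)
                  (abs_comp_le_norm w k) (abs_nonneg _) (by positivity)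
            _ = |π i j k| * ‖w‖^2 := by ring
      _ = (∑ j, ∑ k, |π i j k|) * ‖w‖^2 := by
          simp [Finset.sum_mul]
  have h2 : |∑ j, AC i j * w j| ≤ (∑ j, |AC i j|) * ‖w‖ := by
    calc |∑ j, AC i j * w j| ≤ ∑ j, |AC i j * w j| := Finset.abs_sum_le_sum_abs _ _
      _ ≤ ∑ j, |AC i j| * ‖w‖ := by
          apply Finset.sum_le_sum; intro j _
          rw [abs_mul]
          exact mul_le_mul_of_nonneg_left (abs_comp_le_norm w j) (abs_nonneg _)
      _ = (∑ j, |AC i j|) * ‖w‖ := (Finset.sum_mul _ _ _).symm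
  have key : |gfun π AC w i| ≤
      ((1/2) * (∑ j, ∑ k, |π i j k|) + ∑ j, |AC i j|) * (1 + ‖w‖)^2 := by
    have := abs_add_le ((1/2 : ℝ) * (∑ j, ∑ k, w j * π i j k * w k)) (∑ j, AC i j * w j)
    rw [gfun]
    have hs1 : (0:ℝ) ≤ ∑ j, ∑ k, |π i j k| :=
      Finset.sum_nonneg fun _ _ => Finset.sum_nonneg fun _ _ => abs_nonneg _
    have hs2 : (0:ℝ) ≤ ∑ j, |AC i j| := Finset.sum_nonneg fun _ _ => abs_nonneg _
    have hle1 : ‖w‖^2 ≤ (1 + ‖w‖)^2 := by nlinarith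
    have hle2 : ‖w‖ ≤ (1 + ‖w‖)^2 := by nlinarith
    calc |(1/2 : ℝ) * (∑ j, ∑ k, w j * π i j k * w k) + ∑ j, AC i j * w j|
        ≤ |(1/2 : ℝ) * (∑ j, ∑ k, w j * π i j k * w k)| + |∑ j, AC i j * w j| := this
      _ ≤ (1/2) * ((∑ j, ∑ k, |π i j k|) * ‖w‖^2) + (∑ j, |AC i j|) * ‖w‖ := by
          rw [abs_mul]
          have : |(1/2 : ℝ)| = 1/2 := by norm_num
          rw [this]
          have := mul_le_mul_of_nonneg_left h1 (by norm_num : (0:ℝ) ≤ 1/2)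
          linarith
      _ ≤ ((1/2) * (∑ j, ∑ k, |π i j k|) + ∑ j, |AC i j|) * (1 + ‖w‖)^2 := by
          have a1 : (1/2) * ((∑ j, ∑ k, |π i j k|) * ‖w‖^2)
              ≤ (1/2) * ((∑ j, ∑ k, |π i j k|) * (1 + ‖w‖)^2) := by
            apply mul_le_mul_of_nonneg_left _ (by norm_num)
            exact mul_le_mul_of_nonneg_left hle1 hs1
          have a2 : (∑ j, |AC i j|) * ‖w‖ ≤ (∑ j, |AC i j|) * (1 + ‖w‖)^2 :=
            mul_le_mul_of_nonneg_left hle2 hs2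
          ring_nf
          ring_nf at a1 a2
          linarith
  calc |gfun π AC w i| ≤ ((1/2) * (∑ j, ∑ k, |π i j k|) + ∑ j, |AC i j|) * (1 + ‖w‖)^2 := key
    _ ≤ GB π AC * (1 + ‖w‖)^2 :=
        mul_le_mul_of_nonneg_right (rowconst_le π AC i) (by positivity)

lemma gfun_lip {W : ℝ} (hW : 0 ≤ W) {w w' : Fin n → ℝ} (hw : ‖w‖ ≤ W) (hw' : ‖w'‖ ≤ W)
    (i : Fin m) :
    |gfun π AC w i - gfun π AC w' i| ≤ GB π AC * (2*W+1) * ‖w - w'‖ := by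
  have hd : ∀ j, |w j - w' j| ≤ ‖w - w'‖ := fun j => by
    simpa using abs_comp_le_norm (w - w') j
  have hwj : ∀ j, |w j| ≤ W := fun j => (abs_comp_le_norm w j).trans hw
  have hwj' : ∀ j, |w' j| ≤ W := fun j => (abs_comp_le_norm w' j).trans hw'
  have hdn : 0 ≤ ‖w - w'‖ := norm_nonneg _
  have h1 : |∑ j, ∑ k, w j * π i j k * w k - ∑ j, ∑ k, w' j * π i j k * w' k|
      ≤ (∑ j, ∑ k, |π i j k|) * (2 * W * ‖w - w'‖) := by
    have he : ∑ j, ∑ k, w j * π i j k * w k - ∑ j, ∑ k, w' j * π i j k * w' k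
        = ∑ j, ∑ k, ((w j - w' j) * π i j k * w k + w' j * π i j k * (w k - w' k)) := by
      rw [← Finset.sum_sub_distrib]
      apply Finset.sum_congr rfl; intro j _
      rw [← Finset.sum_sub_distrib]
      apply Finset.sum_congr rfl; intro k _
      ring
    rw [he]
    calc |∑ j, ∑ k, ((w j - w' j) * π i j k * w k + w' j * π i j k * (w k - w' k))|
        ≤ ∑ j, ∑ k, |(w j - w' j) * π i j k * w k + w' j * π i j k * (w k - w' k)| := by
          refine (Finset.abs_sum_le_sum_abs _ _).trans (Finset.sum_le_sum fun j _ =>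
            Finset.abs_sum_le_sum_abs _ _)
      _ ≤ ∑ j, ∑ k, |π i j k| * (2 * W * ‖w - w'‖) := by
          apply Finset.sum_le_sum; intro j _; apply Finset.sum_le_sum; intro k _
          calc |(w j - w' j) * π i j k * w k + w' j * π i j k * (w k - w' k)|
              ≤ |(w j - w' j) * π i j k * w k| + |w' j * π i j k * (w k - w' k)| := abs_add_le _ _
            _ = |w j - w' j| * |π i j k| * |w k| + |w' j| * |π i j k| * |w k - w' k| := by
                rw [abs_mul, abs_mul, abs_mul, abs_mul]
            _ ≤ ‖w - w'‖ * |π i j k| * W + W * |π i j k| * ‖w - w'‖ := by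
                have b1 : |w j - w' j| * |π i j k| * |w k| ≤ ‖w - w'‖ * |π i j k| * W := by
                  apply mul_le_mul (mul_le_mul (hd j) le_rfl (abs_nonneg _) hdn) (hwj k)
                    (abs_nonneg _) (by positivity)
                have b2 : |w' j| * |π i j k| * |w k - w' k| ≤ W * |π i j k| * ‖w - w'‖ := by
                  apply mul_le_mul (mul_le_mul (hwj' j) le_rfl (abs_nonneg _) hW) (hd k)
                    (abs_nonneg _) (by positivity)
                linarith
            _ = |π i j k| * (2 * W * ‖w - w'‖) := by ring
      _ = (∑ j, ∑ k, |π i j k|) * (2 * W * ‖w - w'‖) := by simp [Finset.sum_mul]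
  have h2 : |∑ j, AC i j * w j - ∑ j, AC i j * w' j| ≤ (∑ j, |AC i j|) * ‖w - w'‖ := by
    rw [← Finset.sum_sub_distrib]
    calc |∑ j, (AC i j * w j - AC i j * w' j)| ≤ ∑ j, |AC i j * w j - AC i j * w' j| :=
          Finset.abs_sum_le_sum_abs _ _
      _ ≤ ∑ j, |AC i j| * ‖w - w'‖ := by
          apply Finset.sum_le_sum; intro j _
          rw [← mul_sub, abs_mul]
          exact mul_le_mul_of_nonneg_left (hd j) (abs_nonneg _)
      _ = (∑ j, |AC i j|) * ‖w - w'‖ := (Finset.sum_mul _ _ _).symm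
  have hs1 : (0:ℝ) ≤ ∑ j, ∑ k, |π i j k| :=
    Finset.sum_nonneg fun _ _ => Finset.sum_nonneg fun _ _ => abs_nonneg _
  have hs2 : (0:ℝ) ≤ ∑ j, |AC i j| := Finset.sum_nonneg fun _ _ => abs_nonneg _
  have key : |gfun π AC w i - gfun π AC w' i|
      ≤ ((1/2) * (∑ j, ∑ k, |π i j k|) + ∑ j, |AC i j|) * ((2*W+1) * ‖w - w'‖) := by
    simp only [gfun]
    calc |(1/2 : ℝ) * (∑ j, ∑ k, w j * π i j k * w k) + ∑ j, AC i j * w j -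
            ((1/2 : ℝ) * (∑ j, ∑ k, w' j * π i j k * w' k) + ∑ j, AC i j * w' j)|
        ≤ |(1/2 : ℝ) * ((∑ j, ∑ k, w j * π i j k * w k) - ∑ j, ∑ k, w' j * π i j k * w' k)|
          + |∑ j, AC i j * w j - ∑ j, AC i j * w' j| := by
          have he : (1/2 : ℝ) * (∑ j, ∑ k, w j * π i j k * w k) + ∑ j, AC i j * w j -
              ((1/2 : ℝ) * (∑ j, ∑ k, w' j * π i j k * w' k) + ∑ j, AC i j * w' j)
              = (1/2 : ℝ) * ((∑ j, ∑ k, w j * π i j k * w k) - ∑ j, ∑ k, w' j * π i j k * w' k)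
                + (∑ j, AC i j * w j - ∑ j, AC i j * w' j) := by ring
          rw [he]
          exact abs_add_le _ _
      _ ≤ (1/2) * ((∑ j, ∑ k, |π i j k|) * (2 * W * ‖w - w'‖)) + (∑ j, |AC i j|) * ‖w - w'‖ := by
          rw [abs_mul]
          have : |(1/2 : ℝ)| = 1/2 := by norm_num
          rw [this]
          have := mul_le_mul_of_nonneg_left h1 (by norm_num : (0:ℝ) ≤ 1/2)
          linarith
      _ ≤ ((1/2) * (∑ j, ∑ k, |π i j k|) + ∑ j, |AC i j|) * ((2*W+1) * ‖w - w'‖) := by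
          nlinarith [mul_nonneg hs1 hdn, mul_nonneg hs2 hdn, mul_nonneg (mul_nonneg hs1 hW) hdn]
  calc |gfun π AC w i - gfun π AC w' i|
      ≤ ((1/2) * (∑ j, ∑ k, |π i j k|) + ∑ j, |AC i j|) * ((2*W+1) * ‖w - w'‖) := key
    _ ≤ GB π AC * ((2*W+1) * ‖w - w'‖) := by
        apply mul_le_mul_of_nonneg_right (rowconst_le π AC i) (by positivity)
    _ = GB π AC * (2*W+1) * ‖w - w'‖ := by ring

lemma fRic_lip (w : Fin n → ℝ) {R : ℝ} (hR : 0 ≤ R) {v v' : Fin m → ℝ}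
    (hv : ‖v‖ ≤ R) (hv' : ‖v'‖ ≤ R) :
    ‖fRic I AV π AC v w - fRic I AV π AC v' w‖ ≤ (R + SAV AV) * ‖v - v'‖ := by
  have hdn : 0 ≤ ‖v - v'‖ := norm_nonneg _
  rw [pi_norm_le_iff_of_nonneg (mul_nonneg (by linarith [SAV_nonneg AV]) hdn)]
  intro i
  have hd : ∀ k, |v k - v' k| ≤ ‖v - v'‖ := fun k => by
    simpa using abs_comp_le_norm (v - v') k
  have hc : (0:ℝ) ≤ (if i ∈ I then (1:ℝ) else 0) ∧ (if i ∈ I then (1:ℝ) else 0) ≤ 1 := by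
    split_ifs <;> norm_num
  have hdiff : fRic I AV π AC v w i - fRic I AV π AC v' w i
      = (1/2) * ((v i)^2 - (v' i)^2) * (if i ∈ I then (1:ℝ) else 0)
        + ∑ k ∈ Finset.univ.filter (fun k => k ≤ i), AV i k * (v k - v' k) := by
    simp only [fRic, mul_sub]
    rw [Finset.sum_sub_distrib]
    ring
  have h1 : |(1/2) * ((v i)^2 - (v' i)^2) * (if i ∈ I then (1:ℝ) else 0)|
      ≤ R * ‖v - v'‖ := by
    rw [abs_mul, abs_mul]
    have e1 : |(v i)^2 - (v' i)^2| = |v i - v' i| * |v i + v' i| := by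
      rw [← abs_mul]; congr 1; ring
    have e2 : |v i + v' i| ≤ 2 * R := by
      calc |v i + v' i| ≤ |v i| + |v' i| := abs_add_le _ _
        _ ≤ R + R := add_le_add ((abs_comp_le_norm v i).trans hv)
            ((abs_comp_le_norm v' i).trans hv')
        _ = 2 * R := by ring
    have e3 : |(if i ∈ I then (1:ℝ) else 0)| ≤ 1 := by split_ifs <;> norm_num
    calc |(1/2 : ℝ)| * |(v i)^2 - (v' i)^2| * |(if i ∈ I then (1:ℝ) else 0)|
        ≤ |(1/2 : ℝ)| * |(v i)^2 - (v' i)^2| * 1 := by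
          apply mul_le_mul_of_nonneg_left e3 (by positivity)
      _ = (1/2) * (|v i - v' i| * |v i + v' i|) := by
          rw [e1]; norm_num
      _ ≤ (1/2) * (‖v - v'‖ * (2*R)) := by
          apply mul_le_mul_of_nonneg_left _ (by norm_num)
          exact mul_le_mul (hd i) e2 (abs_nonneg _) hdn
      _ = R * ‖v - v'‖ := by ring
  have h2 : |∑ k ∈ Finset.univ.filter (fun k => k ≤ i), AV i k * (v k - v' k)|
      ≤ SAV AV * ‖v - v'‖ := by
    calc |∑ k ∈ Finset.univ.filter (fun k => k ≤ i), AV i k * (v k - v' k)|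
        ≤ ∑ k ∈ Finset.univ.filter (fun k => k ≤ i), |AV i k * (v k - v' k)| :=
          Finset.abs_sum_le_sum_abs _ _
      _ ≤ ∑ k ∈ Finset.univ.filter (fun k => k ≤ i), |AV i k| * ‖v - v'‖ := by
          apply Finset.sum_le_sum; intro k _
          rw [abs_mul]
          exact mul_le_mul_of_nonneg_left (hd k) (abs_nonneg _)
      _ ≤ ∑ k, |AV i k| * ‖v - v'‖ := by
          apply Finset.sum_le_sum_of_subset_of_nonneg (Finset.filter_subset _ _)
          intro k _ _; positivity
      _ = (∑ k, |AV i k|) * ‖v - v'‖ := (Finset.sum_mul _ _ _).symm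
      _ ≤ SAV AV * ‖v - v'‖ := mul_le_mul_of_nonneg_right (row_AV_le AV i) hdn
  calc ‖(fRic I AV π AC v w - fRic I AV π AC v' w) i‖
      = |fRic I AV π AC v w i - fRic I AV π AC v' w i| := by
        simp [Real.norm_eq_abs]
    _ ≤ R * ‖v - v'‖ + SAV AV * ‖v - v'‖ := by
        rw [hdiff]
        exact (abs_add_le _ _).trans (add_le_add h1 h2)
    _ = (R + SAV AV) * ‖v - v'‖ := by ring

lemma fRic_bound (w : Fin n → ℝ) {R : ℝ} (hR : 0 ≤ R) {v : Fin m → ℝ} (hv : ‖v‖ ≤ R) :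
    ‖fRic I AV π AC v w‖ ≤ (1/2)*R^2 + SAV AV * R + GB π AC * (1+‖w‖)^2 := by
  have hS := SAV_nonneg AV
  have hG := GB_nonneg π AC
  rw [pi_norm_le_iff_of_nonneg (by positivity)]
  intro i
  have hvi : |v i| ≤ R := (abs_comp_le_norm v i).trans hv
  have h1 : |(1/2) * (v i)^2 * (if i ∈ I then (1:ℝ) else 0)| ≤ (1/2) * R^2 := by
    rw [abs_mul, abs_mul]
    have e3 : |(if i ∈ I then (1:ℝ) else 0)| ≤ 1 := by split_ifs <;> norm_num
    have : |(v i)^2| ≤ R^2 := by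
      rw [abs_of_nonneg (sq_nonneg _)]
      exact sq_le_sq' (by linarith [abs_le.mp hvi]) (abs_le.mp hvi).2
    calc |(1/2:ℝ)| * |(v i)^2| * |(if i ∈ I then (1:ℝ) else 0)|
        ≤ |(1/2:ℝ)| * |(v i)^2| * 1 := mul_le_mul_of_nonneg_left e3 (by positivity)
      _ ≤ (1/2) * R^2 := by
          rw [mul_one]
          have : |(1/2:ℝ)| = 1/2 := by norm_num
          rw [this]
          linarith
  have h2 : |∑ k ∈ Finset.univ.filter (fun k => k ≤ i), AV i k * v k| ≤ SAV AV * R := by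
    calc |∑ k ∈ Finset.univ.filter (fun k => k ≤ i), AV i k * v k|
        ≤ ∑ k ∈ Finset.univ.filter (fun k => k ≤ i), |AV i k * v k| :=
          Finset.abs_sum_le_sum_abs _ _
      _ ≤ ∑ k ∈ Finset.univ.filter (fun k => k ≤ i), |AV i k| * R := by
          apply Finset.sum_le_sum; intro k _
          rw [abs_mul]
          exact mul_le_mul_of_nonneg_left ((abs_comp_le_norm v k).trans hv) (abs_nonneg _)
      _ ≤ ∑ k, |AV i k| * R := by
          apply Finset.sum_le_sum_of_subset_of_nonneg (Finset.filter_subset _ _)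
          intro k _ _; positivity
      _ = (∑ k, |AV i k|) * R := (Finset.sum_mul _ _ _).symm
      _ ≤ SAV AV * R := mul_le_mul_of_nonneg_right (row_AV_le AV i) hR
  have h3 := gfun_bound π AC w i
  calc ‖fRic I AV π AC v w i‖ = |fRic I AV π AC v w i| := Real.norm_eq_abs _
    _ ≤ |(1/2) * (v i)^2 * (if i ∈ I then (1:ℝ) else 0)|
        + |∑ k ∈ Finset.univ.filter (fun k => k ≤ i), AV i k * v k| + |gfun π AC w i| := by
        simp only [fRic]
        exact (abs_add_le _ _).trans (add_le_add_left (abs_add_le _ _) _)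
    _ ≤ (1/2)*R^2 + SAV AV * R + GB π AC * (1+‖w‖)^2 := by
        have := add_le_add (add_le_add h1 h2) h3
        linarith

end FBounds

/-- Invariance lemma: if the derivative is nonnegative whenever `h` is in `[L', L)`,
and `h a ≥ L`, then `h` stays `≥ L'` on `[a, b]`. -/
lemma invariance_lemma {h φ : ℝ → ℝ} {a b L L' : ℝ} (hL : L' < L)
    (hd : ∀ t ∈ Icc a b, HasDerivAt h (φ t) t)
    (key : ∀ t ∈ Icc a b, L' ≤ h t → h t < L → 0 ≤ φ t)
    (h0 : L ≤ h a) : ∀ t ∈ Icc a b, L' ≤ h t := by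
  intro t₂ ht₂
  by_contra hcon
  push_neg at hcon
  have hcont : ContinuousOn h (Icc a b) := fun t ht =>
    (hd t ht).continuousAt.continuousWithinAt
  have hat₂ : a ≤ t₂ := ht₂.1
  have hsub : Icc a t₂ ⊆ Icc a b := Icc_subset_Icc le_rfl ht₂.2
  -- the set A
  set A : Set ℝ := Icc a t₂ ∩ h ⁻¹' (Ici L) with hA
  have hAclosed : IsClosed A :=
    (hcont.mono hsub).preimage_isClosed_of_isClosed isClosed_Icc isClosed_Ici
  have hAne : A.Nonempty := ⟨a, ⟨le_rfl, hat₂⟩, h0⟩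
  have hAbdd : BddAbove A := (bddAbove_Icc (a := a) (b := t₂)).mono inter_subset_left
  set ts : ℝ := sSup A with hts
  have htsA : ts ∈ A := hAclosed.csSup_mem hAne hAbdd
  have htsb : ts ≤ t₂ := htsA.1.2
  have hats : a ≤ ts := htsA.1.1
  have hhts : L ≤ h ts := htsA.2
  -- the set B
  have hsub2 : Icc ts t₂ ⊆ Icc a b := Icc_subset_Icc hats ht₂.2
  set B : Set ℝ := Icc ts t₂ ∩ h ⁻¹' (Iic L') with hB
  have hBclosed : IsClosed B :=
    (hcont.mono hsub2).preimage_isClosed_of_isClosed isClosed_Icc isClosed_Iic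
  have hBne : B.Nonempty := ⟨t₂, ⟨htsb, le_rfl⟩, le_of_lt hcon⟩
  have hBbdd : BddBelow B := (bddBelow_Icc (a := t₂) (b := ts)).mono inter_subset_left
  set ss : ℝ := sInf B with hss
  have hssB : ss ∈ B := hBclosed.csInf_mem hBne hBbdd
  have htsss : ts ≤ ss := hssB.1.1
  have hsst₂ : ss ≤ t₂ := hssB.1.2
  have hhss : h ss ≤ L' := hssB.2
  have htsltss : ts < ss := by
    rcases lt_or_eq_of_le htsss with hlt | he
    · exact hlt
    · exfalso; rw [← he] at hhss; linarith
  -- on Ioo ts ss, h is between L' and L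
  have hmem : ∀ t ∈ Ioo ts ss, L' < h t ∧ h t < L := by
    intro t ht
    constructor
    · by_contra hle; push_neg at hle
      have : ss ≤ t := csInf_le hBbdd ⟨⟨ht.1.le, ht.2.le.trans hsst₂⟩, hle⟩
      linarith [ht.2]
    · by_contra hge; push_neg at hge
      have : t ≤ ts := le_csSup hAbdd ⟨⟨hats.trans ht.1.le, ht.2.le.trans hsst₂⟩, hge⟩
      linarith [ht.1]
  -- h is monotone on [ts, ss]
  have hmono : MonotoneOn h (Icc ts ss) := by
    apply monotoneOn_of_deriv_nonneg (convex_Icc ts ss)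
      (hcont.mono (Icc_subset_Icc hats (hsst₂.trans ht₂.2)))
    · intro x hx
      rw [interior_Icc] at hx
      have hxab : x ∈ Icc a b := ⟨hats.trans hx.1.le, (hx.2.le.trans hsst₂).trans ht₂.2⟩
      exact (hd x hxab).differentiableAt.differentiableWithinAt
    · intro x hx
      rw [interior_Icc] at hx
      have hxab : x ∈ Icc a b := ⟨hats.trans hx.1.le, (hx.2.le.trans hsst₂).trans ht₂.2⟩
      rw [(hd x hxab).deriv]
      exact key x hxab (hmem x hx).1.le (hmem x hx).2
  have := hmono ⟨le_rfl, htsss⟩ ⟨htsss, le_rfl⟩ htsss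
  linarith

/-- Riccati comparison: a scalar function with `h' ≥ h²/4 - C` starting above `M`
(with `M² ≥ 32 C`) cannot live longer than `8/M`. -/
lemma riccati_blowup {h φ : ℝ → ℝ} {a b C M : ℝ} (hab : a ≤ b) (hM : 0 < M)
    (hC : 0 ≤ C) (hCM : 32 * C ≤ M ^ 2)
    (hd : ∀ t ∈ Icc a b, HasDerivAt h (φ t) t)
    (key : ∀ t ∈ Icc a b, (1/4) * (h t)^2 - C ≤ φ t)
    (ha : M ≤ h a) : b - a < 8 / M := by
  have hpos : ∀ t ∈ Icc a b, M/2 ≤ h t := by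
    apply invariance_lemma (L := M) (L' := M/2) (by linarith) hd _ ha
    intro t ht h1 _
    have := key t ht
    nlinarith
  have hne : ∀ t ∈ Icc a b, 0 < h t := by
    intro t ht; have := hpos t ht; linarith
  have hd8 : ∀ t ∈ Icc a b, (1/8) * (h t)^2 ≤ φ t := by
    intro t ht
    have h1 := hpos t ht
    have h2 := key t ht
    nlinarith
  rcases eq_or_lt_of_le hab with he | hlt
  · rw [← he]; simp; positivity
  · -- MVT for ψ = -(h)⁻¹
    have hψd : ∀ t ∈ Icc a b, HasDerivAt (fun t => -(h t)⁻¹) (φ t / (h t)^2) t := by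
      intro t ht
      have := ((hd t ht).inv (hne t ht).ne').neg
      rw [show φ t / (h t)^2 = -(-φ t / h t ^ 2) by ring]
      exact this
    have hψcont : ContinuousOn (fun t => -(h t)⁻¹) (Icc a b) := fun t ht =>
      (hψd t ht).continuousAt.continuousWithinAt
    obtain ⟨ξ, hξ, hslope⟩ := exists_hasDerivAt_eq_slope (fun t => -(h t)⁻¹)
      (fun t => φ t / (h t)^2) hlt hψcont (fun x hx => hψd x (Ioo_subset_Icc_self hx))
    have hξI : ξ ∈ Icc a b := Ioo_subset_Icc_self hξ
    have hξpos := hne ξ hξI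
    have h18 : (1:ℝ)/8 ≤ φ ξ / (h ξ)^2 := by
      rw [le_div_iff₀ (by positivity)]
      have := hd8 ξ hξI
      linarith
    have hslope' : (b - a) / 8 ≤ -(h b)⁻¹ - -(h a)⁻¹ := by
      rw [hslope, le_div_iff₀ (by linarith : (0:ℝ) < b - a)] at h18
      linarith
    have hψb : -(h b)⁻¹ < 0 := neg_neg_iff_pos.mpr (inv_pos.mpr (hne b ⟨hab, le_rfl⟩))
    have hψa : -(1/M) ≤ -(h a)⁻¹ := by
      have h2 : (h a)⁻¹ ≤ M⁻¹ := inv_anti₀ hM ha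
      simp only [neg_le_neg_iff, one_div]
      exact h2
    have h1 : -(h b)⁻¹ - -(h a)⁻¹ < 1/M := by linarith
    have h2 : (b-a)/8 < 1/M := lt_of_le_of_lt hslope' h1
    have h8M : 8 / M = 8 * (1/M) := by field_simp
    rw [h8M]
    linarith

/-- Componentwise clamp to `[-R, R]`. -/
def clampE {d : ℕ} (R : ℝ) (x : Fin d → ℝ) : Fin d → ℝ := fun i => max (-R) (min R (x i))

lemma clampE_norm_le {d : ℕ} {R : ℝ} (hR : 0 ≤ R) (x : Fin d → ℝ) : ‖clampE R x‖ ≤ R := by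
  rw [pi_norm_le_iff_of_nonneg hR]
  intro i
  rw [Real.norm_eq_abs, abs_le]
  exact ⟨le_max_left _ _, max_le (by linarith) (min_le_left _ _)⟩

lemma clampE_eq {d : ℕ} {R : ℝ} {x : Fin d → ℝ} (h : ‖x‖ ≤ R) : clampE R x = x := by
  funext i
  have hi : |x i| ≤ R := by
    have := norm_le_pi_norm x i
    rw [Real.norm_eq_abs] at this
    linarith
  rw [abs_le] at hi
  simp only [clampE, min_eq_right hi.2, max_eq_right hi.1]

lemma clampE_lip {d : ℕ} (R : ℝ) (x y : Fin d → ℝ) :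
    ‖clampE R x - clampE R y‖ ≤ ‖x - y‖ := by
  rw [pi_norm_le_iff_of_nonneg (norm_nonneg _)]
  intro i
  simp only [Pi.sub_apply, clampE, Real.norm_eq_abs]
  calc |max (-R) (min R (x i)) - max (-R) (min R (y i))|
      ≤ |min R (x i) - min R (y i)| := by
        rw [max_comm (-R) _, max_comm (-R) _]
        exact abs_max_sub_max_le_abs _ _ _
    _ ≤ |x i - y i| := by
        simpa using abs_min_sub_min_le_max R (x i) R (y i)
    _ ≤ ‖x - y‖ := by
        have := norm_le_pi_norm (x - y) i
        simpa using this

/-- Global-in-time existence for a bounded globally Lipschitz field. -/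
lemma global_sol {d : ℕ} {G : (Fin d → ℝ) → (Fin d → ℝ)} {K C : NNReal}
    (hL : LipschitzWith K G) (hB : ∀ x, ‖G x‖ ≤ C) (x₀ : Fin d → ℝ) {τ : ℝ} (hτ : 0 ≤ τ) :
    ∃ f : ℝ → Fin d → ℝ, f 0 = x₀ ∧ ∀ t ∈ Ioo (-τ) τ, HasDerivAt f (G (f t)) t := by
  have hpl : IsPicardLindelof (fun _ x => G x) (tmin := -τ) (tmax := τ)
      ⟨0, neg_nonpos.mpr hτ, hτ⟩ x₀ (C * ⟨τ, hτ⟩ + 1) 0 C K :=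
    { lipschitzOnWith := fun t _ => hL.lipschitzOnWith
      continuousOn := fun x _ => continuousOn_const
      norm_le := fun t _ x _ => hB x
      mul_max_le := by
        simp only [sub_zero, zero_sub, neg_neg, max_self, NNReal.coe_add, NNReal.coe_one,
          NNReal.coe_zero]
        rw [show ((C * ⟨τ, hτ⟩ : NNReal) : ℝ) = C * τ from rfl]
        linarith }
  obtain ⟨f, hf0, hf⟩ := hpl.exists_eq_forall_mem_Icc_hasDerivWithinAt₀
  exact ⟨f, hf0, fun t ht =>
    (hf t (Ioo_subset_Icc_self ht)).hasDerivAt (Icc_mem_nhds ht.1 ht.2)⟩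

/-- Uniqueness of solutions for a locally Lipschitz field. -/
lemma uniq_sol {d : ℕ} {G : (Fin d → ℝ) → (Fin d → ℝ)}
    (hloc : ∀ R : ℝ, ∃ K : NNReal, LipschitzOnWith K G (Metric.closedBall 0 R))
    {y z : ℝ → Fin d → ℝ} {b : ℝ}
    (hy : ∀ t ∈ Icc 0 b, HasDerivAt y (G (y t)) t)
    (hz : ∀ t ∈ Icc 0 b, HasDerivAt z (G (z t)) t)
    (h0 : y 0 = z 0) : EqOn y z (Icc 0 b) := by
  rcases le_or_gt 0 b with hb | hb
  · have hycont : ContinuousOn y (Icc 0 b) := fun t ht =>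
      (hy t ht).continuousAt.continuousWithinAt
    have hzcont : ContinuousOn z (Icc 0 b) := fun t ht =>
      (hz t ht).continuousAt.continuousWithinAt
    obtain ⟨Ry, hRy⟩ := isCompact_Icc.exists_bound_of_continuousOn hycont
    obtain ⟨Rz, hRz⟩ := isCompact_Icc.exists_bound_of_continuousOn hzcont
    obtain ⟨K, hK⟩ := hloc (max Ry Rz)
    apply ODE_solution_unique_of_mem_Icc_right
      (v := fun _ x => G x) (s := fun _ => Metric.closedBall 0 (max Ry Rz)) (K := K)
      (fun _ _ => hK) hycont
      (fun t ht => (hy t (Ico_subset_Icc_self ht)).hasDerivWithinAt)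
      (fun t ht => by
        rw [Metric.mem_closedBall, dist_zero_right]
        exact (hRy t (Ico_subset_Icc_self ht)).trans (le_max_left _ _))
      hzcont
      (fun t ht => (hz t (Ico_subset_Icc_self ht)).hasDerivWithinAt)
      (fun t ht => by
        rw [Metric.mem_closedBall, dist_zero_right]
        exact (hRz t (Ico_subset_Icc_self ht)).trans (le_max_right _ _))
      h0
  · rw [Icc_eq_empty_of_lt hb]
    exact fun t ht => absurd ht (notMem_empty t)

section ODETools
variable {m n : ℕ} (I : Finset (Fin m)) (AV : Matrix (Fin m) (Fin m) ℝ)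
  (π : Fin m → Matrix (Fin n) (Fin n) ℝ) (AC : Matrix (Fin m) (Fin n) ℝ)

lemma fRic_wlip {W : ℝ} (hW : 0 ≤ W) (v : Fin m → ℝ) {w w' : Fin n → ℝ}
    (hw : ‖w‖ ≤ W) (hw' : ‖w'‖ ≤ W) :
    ‖fRic I AV π AC v w - fRic I AV π AC v w'‖ ≤ GB π AC * (2*W+1) * ‖w - w'‖ := by
  have hGB := GB_nonneg π AC
  rw [pi_norm_le_iff_of_nonneg (by positivity)]
  intro i
  have he : (fRic I AV π AC v w - fRic I AV π AC v w') i
      = gfun π AC w i - gfun π AC w' i := by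
    simp only [Pi.sub_apply, fRic]
    ring
  rw [he, Real.norm_eq_abs]
  exact gfun_lip π AC hW hw hw' i

/-- The clamped field is globally Lipschitz. -/
lemma clamped_lip {R : ℝ} (hR : 0 ≤ R) (w : Fin n → ℝ) :
    LipschitzWith (R + SAV AV).toNNReal (fun v => fRic I AV π AC (clampE R v) w) := by
  apply LipschitzWith.of_dist_le_mul
  intro x y
  rw [dist_eq_norm, dist_eq_norm, Real.coe_toNNReal _ (by linarith [SAV_nonneg AV])]
  calc ‖fRic I AV π AC (clampE R x) w - fRic I AV π AC (clampE R y) w‖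
      ≤ (R + SAV AV) * ‖clampE R x - clampE R y‖ :=
        fRic_lip I AV π AC w hR (clampE_norm_le hR x) (clampE_norm_le hR y)
    _ ≤ (R + SAV AV) * ‖x - y‖ :=
        mul_le_mul_of_nonneg_left (clampE_lip R x y) (by linarith [SAV_nonneg AV])

/-- Local Lipschitz property of the Riccati field, in the form needed for `uniq_sol`. -/
lemma fRic_loclip (w : Fin n → ℝ) :
    ∀ R : ℝ, ∃ K : NNReal, LipschitzOnWith K (fun v => fRic I AV π AC v w)
      (Metric.closedBall 0 R) := by
  intro R
  refine ⟨(max R 0 + SAV AV).toNNReal, ?_⟩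
  rw [lipschitzOnWith_iff_dist_le_mul]
  intro x hx y hy
  rw [Metric.mem_closedBall, dist_zero_right] at hx hy
  rw [dist_eq_norm, dist_eq_norm, Real.coe_toNNReal _ (by
    have := SAV_nonneg AV
    have : (0:ℝ) ≤ max R 0 := le_max_right _ _
    linarith [SAV_nonneg AV])]
  exact fRic_lip I AV π AC w (le_max_right _ _) (hx.trans (le_max_left _ _))
    (hy.trans (le_max_left _ _))

/-- Existence of global solutions to the clamped equation. -/
lemma clamped_sol {R : ℝ} (hR : 0 ≤ R) (w : Fin n → ℝ) (x₀ : Fin m → ℝ) {τ : ℝ} (hτ : 0 ≤ τ) :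
    ∃ f : ℝ → Fin m → ℝ, f 0 = x₀ ∧
      ∀ t ∈ Ioo (-τ) τ, HasDerivAt f (fRic I AV π AC (clampE R (f t)) w) t := by
  have hS := SAV_nonneg AV
  have hG := GB_nonneg π AC
  apply global_sol (K := (R + SAV AV).toNNReal)
    (C := ((1/2)*R^2 + SAV AV * R + GB π AC * (1+‖w‖)^2).toNNReal)
    (clamped_lip I AV π AC hR w) _ x₀ hτ
  intro x
  rw [Real.coe_toNNReal _ (by positivity)]
  exact fRic_bound I AV π AC w hR (clampE_norm_le hR x)

/-- A solution bounded on `[0,b)` can be extended beyond `b`. -/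
lemma sol_extend (w : Fin n → ℝ) {y : ℝ → Fin m → ℝ} {b R : ℝ} (hb : 0 < b) (hR : 0 ≤ R)
    (hy : ∀ t, 0 ≤ t → t < b → HasDerivAt y (fRic I AV π AC (y t) w) t)
    (hbd : ∀ t, 0 ≤ t → t < b → ‖y t‖ ≤ R) :
    ∃ z : ℝ → Fin m → ℝ, z 0 = y 0 ∧ ∃ b' : ℝ, b < b' ∧
      ∀ t, 0 ≤ t → t < b' → HasDerivAt z (fRic I AV π AC (z t) w) t := by
  obtain ⟨z, hz0, hz⟩ := clamped_sol I AV π AC (by linarith : (0:ℝ) ≤ R + 1) w (y 0)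
    (by linarith : (0:ℝ) ≤ b + 2)
  have hmem : ∀ t, 0 ≤ t → t ≤ b + 1 → t ∈ Ioo (-(b+2)) (b+2) := fun t h1 h2 =>
    ⟨by linarith, by linarith⟩
  -- y solves the clamped equation on [0, b)
  have hyG : ∀ t, 0 ≤ t → t < b →
      HasDerivAt y (fRic I AV π AC (clampE (R+1) (y t)) w) t := by
    intro t h1 h2
    rw [clampE_eq ((hbd t h1 h2).trans (by linarith))]
    exact hy t h1 h2
  -- z = y on [0, b)
  have heq : ∀ t, 0 ≤ t → t < b → z t = y t := by
    intro t h1 h2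
    have := uniq_sol (G := fun v => fRic I AV π AC (clampE (R+1) v) w)
      (fun ρ => ⟨_, (clamped_lip I AV π AC (by linarith : (0:ℝ) ≤ R+1) w).lipschitzOnWith⟩)
      (y := z) (z := y) (b := t)
      (fun s hs => hz s (hmem s hs.1 (by nlinarith [hs.2])))
      (fun s hs => hyG s hs.1 (lt_of_le_of_lt hs.2 h2))
      (by rw [hz0])
    exact this ⟨h1, le_rfl⟩
  -- bound at b by continuity
  have hzcb : ContinuousAt z b := (hz b (hmem b hb.le (by linarith))).continuousAt
  have hzb : ‖z b‖ ≤ R := by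
    have htend : Filter.Tendsto z (nhdsWithin b (Ico 0 b)) (nhds (z b)) :=
      hzcb.continuousWithinAt
    have hne : (nhdsWithin b (Ico 0 b)).NeBot := by
      apply mem_closure_iff_nhdsWithin_neBot.mp
      rw [closure_Ico hb.ne]
      exact ⟨hb.le, le_rfl⟩
    apply le_of_tendsto (htend.norm)
    filter_upwards [self_mem_nhdsWithin] with t ht
    rw [heq t ht.1 ht.2]
    exact hbd t ht.1 ht.2
  -- eventually below R+1 after b
  have hcontnorm : ContinuousAt (fun t => ‖z t‖) b := hzcb.norm
  have hev : ∀ᶠ t in nhds b, ‖z t‖ < R + 1 :=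
    hcontnorm.eventually_lt_const (by linarith)
  rw [Metric.eventually_nhds_iff] at hev
  obtain ⟨δ, hδpos, hδ⟩ := hev
  refine ⟨z, hz0, b + min (δ/2) 1, by
    have : 0 < min (δ/2) 1 := lt_min (by linarith) one_pos
    linarith, ?_⟩
  intro t h1 h2
  have hmin1 : min (δ/2) 1 ≤ 1 := min_le_right _ _
  have hmin2 : min (δ/2) 1 ≤ δ/2 := min_le_left _ _
  have htle : t ≤ b + 1 := by linarith
  have hzt : ‖z t‖ ≤ R + 1 := by
    rcases lt_or_ge t b with hlt | hge
    · rw [heq t h1 hlt]; linarith [hbd t h1 hlt]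
    · apply le_of_lt
      apply hδ
      rw [Real.dist_eq, abs_of_nonneg (by linarith)]
      linarith
  have := hz t (hmem t h1 htle)
  rwa [clampE_eq hzt] at this

lemma gronwallBound_le' {δ K ε x b : ℝ} (hδ : 0 ≤ δ) (hK : 0 ≤ K) (hε : 0 ≤ ε)
    (hx : 0 ≤ x) (hxb : x ≤ b) :
    gronwallBound δ K ε x ≤ (δ + ε * b) * Real.exp (K * b) := by
  have hb : 0 ≤ b := hx.trans hxb
  rcases eq_or_lt_of_le hK with hK0 | hKpos
  · rw [← hK0, gronwallBound_K0, zero_mul, Real.exp_zero, mul_one]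
    simp only
    nlinarith [mul_le_mul_of_nonneg_left hxb hε]
  · rw [gronwallBound_of_K_ne_0 hKpos.ne']
    have hA : (0:ℝ) < Real.exp (K * b) := Real.exp_pos _
    have h1 : Real.exp (K * x) ≤ Real.exp (K * b) :=
      Real.exp_le_exp.mpr (by nlinarith)
    have h2 : Real.exp (K * b) - 1 ≤ K * b * Real.exp (K * b) := by
      have hh := Real.add_one_le_exp (-(K * b))
      have he : Real.exp (-(K * b)) = (Real.exp (K * b))⁻¹ := Real.exp_neg _
      rw [he] at hh
      have h3 := mul_le_mul_of_nonneg_left hh hA.le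
      rw [mul_inv_cancel₀ hA.ne'] at h3
      nlinarith
    have h4 : Real.exp (K * x) - 1 ≤ K * b * Real.exp (K * b) := by linarith
    have h5 : ε / K * (Real.exp (K * x) - 1) ≤ ε / K * (K * b * Real.exp (K * b)) := by
      apply mul_le_mul_of_nonneg_left h4 (by positivity)
    have h6 : ε / K * (K * b * Real.exp (K * b)) = ε * b * Real.exp (K * b) := by
      field_simp
    have h7 : δ * Real.exp (K * x) ≤ δ * Real.exp (K * b) :=
      mul_le_mul_of_nonneg_left h1 hδ
    rw [h6] at h5
    nlinarith

/-- Continuous dependence: near a solution on `[0,b]`, every nearby initial condition and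
parameter admits a solution on `[0,b]` staying `ε`-close. -/
lemma tube (w₀ : Fin n → ℝ) {y₀ : ℝ → Fin m → ℝ} {b R : ℝ} (hb : 0 ≤ b) (hR : 0 ≤ R)
    (hy₀ : ∀ t ∈ Icc 0 b, HasDerivAt y₀ (fRic I AV π AC (y₀ t) w₀) t)
    (hbd : ∀ t ∈ Icc 0 b, ‖y₀ t‖ ≤ R) {ε : ℝ} (hε : 0 < ε) (hε1 : ε ≤ 1) :
    ∃ δ : ℝ, 0 < δ ∧ ∀ v' w', ‖v' - y₀ 0‖ < δ → ‖w' - w₀‖ < δ →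
      ∃ z : ℝ → Fin m → ℝ, z 0 = v' ∧ ∀ t ∈ Icc 0 b,
        HasDerivAt z (fRic I AV π AC (z t) w') t ∧ ‖z t - y₀ t‖ ≤ ε := by
  have hS := SAV_nonneg AV
  have hG := GB_nonneg π AC
  set R1 : ℝ := R + 1 with hR1
  set Kr : ℝ := R1 + SAV AV with hKr
  have hKrpos : 0 ≤ Kr := by simp only [hKr, hR1]; linarith
  set W : ℝ := ‖w₀‖ + 1 with hW
  have hWpos : 0 ≤ W := by positivity
  set Cw : ℝ := GB π AC * (2*W+1) with hCw
  have hCwpos : 0 ≤ Cw := by positivity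
  set Θ : ℝ := (1 + Cw * b) * Real.exp (Kr * b) with hΘ
  have hΘpos : 0 < Θ := by positivity
  set δ : ℝ := min 1 (ε / (2 * Θ)) with hδdef
  have hδpos : 0 < δ := lt_min one_pos (by positivity)
  have hδ1 : δ ≤ 1 := min_le_left _ _
  have hδΘ : δ * Θ ≤ ε / 2 := by
    have h1 : δ ≤ ε / (2 * Θ) := min_le_right _ _
    calc δ * Θ ≤ (ε / (2 * Θ)) * Θ := mul_le_mul_of_nonneg_right h1 hΘpos.le
      _ = ε / 2 := by field_simp
  refine ⟨δ, hδpos, ?_⟩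
  intro v' w' hv' hw'
  have hw'W : ‖w'‖ ≤ W := by
    calc ‖w'‖ = ‖w₀ + (w' - w₀)‖ := by ring_nf
      _ ≤ ‖w₀‖ + ‖w' - w₀‖ := norm_add_le _ _
      _ ≤ ‖w₀‖ + 1 := by linarith
  have hw₀W : ‖w₀‖ ≤ W := by simp only [hW]; linarith
  obtain ⟨z, hz0, hz⟩ := clamped_sol I AV π AC (by linarith : (0:ℝ) ≤ R1) w' v'
    (by linarith : (0:ℝ) ≤ b + 1)
  have hmem : ∀ t ∈ Icc 0 b, t ∈ Ioo (-(b+1)) (b+1) := fun t ht =>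
    ⟨by linarith [ht.1], by linarith [ht.2]⟩
  have hK : ∀ t : ℝ, LipschitzWith (Kr.toNNReal)
      (fun x => fRic I AV π AC (clampE R1 x) w') := fun _ =>
    clamped_lip I AV π AC (by linarith) w'
  have hgron : ∀ t ∈ Icc 0 b, dist (y₀ t) (z t) ≤
      gronwallBound δ (Kr.toNNReal) (Cw * δ + 0) (t - 0) := by
    apply dist_le_of_approx_trajectories_ODE (v := fun _ x => fRic I AV π AC (clampE R1 x) w')
      (f' := fun t => fRic I AV π AC (y₀ t) w₀)
      (g' := fun t => fRic I AV π AC (clampE R1 (z t)) w') hK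
    · exact fun t ht => (hy₀ t ht).continuousAt.continuousWithinAt
    · exact fun t ht => (hy₀ t (Ico_subset_Icc_self ht)).hasDerivWithinAt
    · intro t ht
      have hyb := hbd t (Ico_subset_Icc_self ht)
      rw [clampE_eq (by linarith : ‖y₀ t‖ ≤ R1), dist_eq_norm]
      calc ‖fRic I AV π AC (y₀ t) w₀ - fRic I AV π AC (y₀ t) w'‖
          ≤ GB π AC * (2*W+1) * ‖w₀ - w'‖ := fRic_wlip I AV π AC hWpos _ hw₀W hw'W
        _ ≤ Cw * δ := by
            have hrev : ‖w₀ - w'‖ < δ := by rw [norm_sub_rev]; exact hw'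
            exact mul_le_mul_of_nonneg_left hrev.le hCwpos
    · exact fun t ht => ((hz t (hmem t ht)).continuousAt).continuousWithinAt
    · exact fun t ht => (hz t (hmem t (Ico_subset_Icc_self ht))).hasDerivWithinAt
    · intro t ht
      rw [dist_self]
    · rw [hz0, dist_eq_norm, ← norm_sub_rev]
      exact hv'.le
  have hclose : ∀ t ∈ Icc 0 b, dist (y₀ t) (z t) ≤ ε / 2 := by
    intro t ht
    have h1 := hgron t ht
    rw [add_zero, sub_zero, Real.coe_toNNReal _ hKrpos] at h1
    have h2 : gronwallBound δ (Kr.toNNReal) (Cw * δ) t ≤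
        (δ + Cw * δ * b) * Real.exp ((Kr.toNNReal : ℝ) * b) :=
      gronwallBound_le' hδpos.le (Kr.toNNReal).coe_nonneg (by positivity) ht.1 ht.2
    rw [Real.coe_toNNReal _ hKrpos] at h2
    have h3 : (δ + Cw * δ * b) * Real.exp (Kr * b) = δ * Θ := by
      simp only [hΘ]; ring
    rw [h3] at h2
    exact le_trans h1 (le_trans h2 hδΘ)
  refine ⟨z, hz0, ?_⟩
  intro t ht
  have hzb : ‖z t‖ ≤ R1 := by
    calc ‖z t‖ = ‖y₀ t + (z t - y₀ t)‖ := by ring_nf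
      _ ≤ ‖y₀ t‖ + ‖z t - y₀ t‖ := norm_add_le _ _
      _ ≤ R + ε := by
          have := hclose t ht
          rw [dist_eq_norm, norm_sub_rev] at this
          have := hbd t ht
          linarith [hclose t ht, (dist_eq_norm (y₀ t) (z t)) ▸ hclose t ht]
      _ ≤ R1 := by simp only [hR1]; linarith
  constructor
  · have := hz t (hmem t ht)
    rwa [clampE_eq hzb] at this
  · have := hclose t ht
    rw [dist_eq_norm, norm_sub_rev] at this
    linarith

lemma sum_filter_le_split (f : Fin m → ℝ) (i : Fin m) :
    ∑ k ∈ Finset.univ.filter (fun k => k ≤ i), f k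
      = f i + ∑ k ∈ Finset.univ.filter (fun k => k < i), f k := by
  have he : Finset.univ.filter (fun k : Fin m => k ≤ i)
      = insert i (Finset.univ.filter (fun k => k < i)) := by
    ext k
    simp only [Finset.mem_filter, Finset.mem_univ, true_and, Finset.mem_insert]
    rw [le_iff_lt_or_eq]
    tauto
  rw [he, Finset.sum_insert (by simp)]

lemma row_AV_filter_le (i₀ : Fin m) (P : Fin m → Prop) [DecidablePred P] :
    ∑ k ∈ Finset.univ.filter P, |AV i₀ k| ≤ SAV AV := by
  calc ∑ k ∈ Finset.univ.filter P, |AV i₀ k| ≤ ∑ k, |AV i₀ k| := by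
        apply Finset.sum_le_sum_of_subset_of_nonneg (Finset.filter_subset _ _)
        intro k _ _; positivity
    _ ≤ SAV AV := row_AV_le AV i₀

variable (hAVoff : ∀ i k : Fin m, i ≠ k → 0 ≤ AV i k)

include hAVoff in
lemma sum_lt_lower {β : ℝ} (hβ : 0 ≤ β) (i₀ : Fin m) (g : Fin m → ℝ)
    (hg : ∀ k, k < i₀ → -β ≤ g k) :
    -(SAV AV * β) ≤ ∑ k ∈ Finset.univ.filter (fun k => k < i₀), AV i₀ k * g k := by
  have h1 : ∑ k ∈ Finset.univ.filter (fun k => k < i₀), AV i₀ k * (-β)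
      ≤ ∑ k ∈ Finset.univ.filter (fun k => k < i₀), AV i₀ k * g k := by
    apply Finset.sum_le_sum
    intro k hk
    rw [Finset.mem_filter] at hk
    exact mul_le_mul_of_nonneg_left (hg k hk.2) (hAVoff i₀ k (ne_of_gt hk.2))
  have h2 : ∑ k ∈ Finset.univ.filter (fun k => k < i₀), AV i₀ k * (-β)
      = (∑ k ∈ Finset.univ.filter (fun k => k < i₀), AV i₀ k) * (-β) :=
    (Finset.sum_mul _ _ _).symm
  have h3 : ∑ k ∈ Finset.univ.filter (fun k => k < i₀), AV i₀ k ≤ SAV AV := by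
    calc ∑ k ∈ Finset.univ.filter (fun k => k < i₀), AV i₀ k
        ≤ ∑ k ∈ Finset.univ.filter (fun k => k < i₀), |AV i₀ k| :=
          Finset.sum_le_sum fun k _ => le_abs_self _
      _ ≤ SAV AV := row_AV_filter_le AV i₀ _
  have h4 : SAV AV * (-β) ≤ (∑ k ∈ Finset.univ.filter (fun k => k < i₀), AV i₀ k) * (-β) :=
    mul_le_mul_of_nonpos_right h3 (by linarith)
  rw [h2] at h1
  nlinarith

include hAVoff in
lemma sum_lt_upper {M : ℝ} (hM : 0 ≤ M) (i₀ : Fin m) (g : Fin m → ℝ)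
    (hg : ∀ k, k < i₀ → g k ≤ M) :
    ∑ k ∈ Finset.univ.filter (fun k => k < i₀), AV i₀ k * g k ≤ SAV AV * M := by
  have h1 : ∑ k ∈ Finset.univ.filter (fun k => k < i₀), AV i₀ k * g k
      ≤ ∑ k ∈ Finset.univ.filter (fun k => k < i₀), AV i₀ k * M := by
    apply Finset.sum_le_sum
    intro k hk
    rw [Finset.mem_filter] at hk
    exact mul_le_mul_of_nonneg_left (hg k hk.2) (hAVoff i₀ k (ne_of_gt hk.2))
  have h2 : ∑ k ∈ Finset.univ.filter (fun k => k < i₀), AV i₀ k * M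
      = (∑ k ∈ Finset.univ.filter (fun k => k < i₀), AV i₀ k) * M :=
    (Finset.sum_mul _ _ _).symm
  have h3 : ∑ k ∈ Finset.univ.filter (fun k => k < i₀), AV i₀ k ≤ SAV AV := by
    calc ∑ k ∈ Finset.univ.filter (fun k => k < i₀), AV i₀ k
        ≤ ∑ k ∈ Finset.univ.filter (fun k => k < i₀), |AV i₀ k| :=
          Finset.sum_le_sum fun k _ => le_abs_self _
      _ ≤ SAV AV := row_AV_filter_le AV i₀ _
  have h4 : (∑ k ∈ Finset.univ.filter (fun k => k < i₀), AV i₀ k) * M ≤ SAV AV * M :=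
    mul_le_mul_of_nonneg_right h3 hM
  linarith

variable (hAVdiag : ∀ i : Fin m, AV i i < 0)

include hAVoff hAVdiag in
/-- Uniform lower bound on all coordinates of solutions. -/
lemma coord_lower {Γ B : ℝ} (hΓ : 0 ≤ Γ) (hB : 0 ≤ B) :
    ∃ β : ℝ, 0 ≤ β ∧ ∀ (w : Fin n → ℝ), (∀ i, -Γ ≤ gfun π AC w i) →
      ∀ (y : ℝ → Fin m → ℝ) (b : ℝ),
      (∀ t ∈ Icc 0 b, HasDerivAt y (fRic I AV π AC (y t) w) t) →
      ‖y 0‖ ≤ B → ∀ t ∈ Icc 0 b, ∀ i, -β ≤ y t i := by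
  suffices H : ∀ j : ℕ, ∃ β : ℝ, 0 ≤ β ∧ ∀ (w : Fin n → ℝ), (∀ i, -Γ ≤ gfun π AC w i) →
      ∀ (y : ℝ → Fin m → ℝ) (b : ℝ),
      (∀ t ∈ Icc 0 b, HasDerivAt y (fRic I AV π AC (y t) w) t) →
      ‖y 0‖ ≤ B → ∀ t ∈ Icc 0 b, ∀ i : Fin m, (i : ℕ) < j → -β ≤ y t i by
    obtain ⟨β, hβ, hH⟩ := H m
    exact ⟨β, hβ, fun w hg y b hy hy0 t ht i => hH w hg y b hy hy0 t ht i i.isLt⟩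
  intro j
  induction j with
  | zero => exact ⟨0, le_rfl, fun w hg y b hy hy0 t ht i hi => absurd hi (Nat.not_lt_zero _)⟩
  | succ j ih =>
    obtain ⟨β, hβ0, hind⟩ := ih
    rcases Nat.lt_or_ge j m with hjm | hjm
    · have ha : AV ⟨j, hjm⟩ ⟨j, hjm⟩ < 0 := hAVdiag _
      refine ⟨max β (B + (SAV AV * β + Γ) / (-AV ⟨j, hjm⟩ ⟨j, hjm⟩) + 1),
        le_trans hβ0 (le_max_left _ _), ?_⟩
      set i₀ : Fin m := ⟨j, hjm⟩
      set c : ℝ := SAV AV * β + Γ with hc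
      have hcpos : 0 ≤ c := by
        have := SAV_nonneg AV
        have := mul_nonneg (SAV_nonneg AV) hβ0
        simp only [hc]; linarith
      set L0 : ℝ := c / (-AV i₀ i₀) with hL0def
      have hL0 : 0 ≤ L0 := div_nonneg hcpos (by linarith)
      intro w hg y b hy hy0 t ht i hij
      rcases Nat.lt_or_ge (i : ℕ) j with hij' | hij'
      · exact le_trans (neg_le_neg (le_max_left β _)) (hind w hg y b hy hy0 t ht i hij')
      · have hii : i = i₀ := Fin.ext (le_antisymm (Nat.lt_succ_iff.mp hij) hij')
        rw [hii]
        have hy0i : -B ≤ y 0 i₀ := by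
          have h1 := (abs_comp_le_norm (y 0) i₀).trans hy0
          rw [abs_le] at h1
          linarith [h1.1]
        have hkey : ∀ s ∈ Icc 0 b, min (y 0 i₀) (-L0) - 1 ≤ y s i₀ → y s i₀ < min (y 0 i₀) (-L0) →
            0 ≤ fRic I AV π AC (y s) w i₀ := by
          intro s hs _ hlt
          have hsi : y s i₀ < -L0 := lt_of_lt_of_le hlt (min_le_right _ _)
          have hsum : -(SAV AV * β) ≤ ∑ k ∈ Finset.univ.filter (fun k => k < i₀),
              AV i₀ k * y s k := by
            apply sum_lt_lower AV hAVoff hβ0 i₀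
            intro k hk
            exact hind w hg y b hy hy0 s hs k (by
              have : (k : ℕ) < (i₀ : ℕ) := hk
              exact this)
          have hdiagmul : c < AV i₀ i₀ * y s i₀ := by
            have hmul := mul_lt_mul_of_neg_left hsi ha
            have heq : AV i₀ i₀ * (-L0) = c := by
              rw [hL0def]
              field_simp
              exact mul_div_cancel_left₀ c ha.ne
            rw [heq] at hmul
            exact hmul
          have hgl := hg i₀
          have hhalf : 0 ≤ (1/2) * (y s i₀)^2 * (if i₀ ∈ I then (1:ℝ) else 0) := by
            split_ifs <;> positivity
          rw [fRic, sum_filter_le_split (fun k => AV i₀ k * y s k) i₀]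
          simp only [hc] at hdiagmul
          linarith
        have hinv := invariance_lemma (h := fun s => y s i₀)
          (φ := fun s => fRic I AV π AC (y s) w i₀) (a := 0) (b := b)
          (L := min (y 0 i₀) (-L0)) (L' := min (y 0 i₀) (-L0) - 1) (by linarith)
          (fun s hs => (hasDerivAt_pi.mp (hy s hs)) i₀) hkey (min_le_left _ _) t ht
        have hmin : -(B + L0) ≤ min (y 0 i₀) (-L0) := le_min (by linarith) (by linarith)
        calc -(max β (B + c / (-AV i₀ i₀) + 1)) ≤ -(B + L0 + 1) := by
              apply neg_le_neg
              rw [hL0def]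
              exact le_max_right _ _
          _ ≤ min (y 0 i₀) (-L0) - 1 := by linarith
          _ ≤ y t i₀ := hinv
    · refine ⟨β, hβ0, fun w hg y b hy hy0 t ht i hij => hind w hg y b hy hy0 t ht i ?_⟩
      exact lt_of_lt_of_le i.isLt hjm

include hAVoff hAVdiag in
/-- Uniform upper bound on coordinates, given that the `I`-coordinates stay below `R`. -/
lemma coord_upper {Γ B R : ℝ} (hΓ : 0 ≤ Γ) (hB : 0 ≤ B) (hR : 0 ≤ R) :
    ∃ M : ℝ, 0 ≤ M ∧ ∀ (w : Fin n → ℝ), (∀ i, |gfun π AC w i| ≤ Γ) →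
      ∀ (y : ℝ → Fin m → ℝ) (b : ℝ),
      (∀ t ∈ Icc 0 b, HasDerivAt y (fRic I AV π AC (y t) w) t) →
      ‖y 0‖ ≤ B → (∀ t ∈ Icc 0 b, ∀ i ∈ I, y t i ≤ R) →
      ∀ t ∈ Icc 0 b, ∀ i, y t i ≤ M := by
  suffices H : ∀ j : ℕ, ∃ M : ℝ, 0 ≤ M ∧ ∀ (w : Fin n → ℝ), (∀ i, |gfun π AC w i| ≤ Γ) →
      ∀ (y : ℝ → Fin m → ℝ) (b : ℝ),
      (∀ t ∈ Icc 0 b, HasDerivAt y (fRic I AV π AC (y t) w) t) →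
      ‖y 0‖ ≤ B → (∀ t ∈ Icc 0 b, ∀ i ∈ I, y t i ≤ R) →
      ∀ t ∈ Icc 0 b, ∀ i : Fin m, (i : ℕ) < j → y t i ≤ M by
    obtain ⟨M, hM, hH⟩ := H m
    exact ⟨M, hM, fun w hg y b hy hy0 hIcap t ht i =>
      hH w hg y b hy hy0 hIcap t ht i i.isLt⟩
  intro j
  induction j with
  | zero => exact ⟨0, le_rfl, fun w hg y b hy hy0 hIcap t ht i hi =>
      absurd hi (Nat.not_lt_zero _)⟩
  | succ j ih =>
    obtain ⟨M, hM0, hind⟩ := ih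
    rcases Nat.lt_or_ge j m with hjm | hjm
    · have ha : AV ⟨j, hjm⟩ ⟨j, hjm⟩ < 0 := hAVdiag _
      refine ⟨max M (max R (B + (SAV AV * M + Γ) / (-AV ⟨j, hjm⟩ ⟨j, hjm⟩) + 1)),
        le_trans hM0 (le_max_left _ _), ?_⟩
      set i₀ : Fin m := ⟨j, hjm⟩
      set c : ℝ := SAV AV * M + Γ with hc
      have hcpos : 0 ≤ c := by
        have := mul_nonneg (SAV_nonneg AV) hM0
        simp only [hc]; linarith
      set L0 : ℝ := c / (-AV i₀ i₀) with hL0def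
      have hL0 : 0 ≤ L0 := div_nonneg hcpos (by linarith)
      intro w hg y b hy hy0 hIcap t ht i hij
      rcases Nat.lt_or_ge (i : ℕ) j with hij' | hij'
      · exact le_trans (hind w hg y b hy hy0 hIcap t ht i hij') (le_max_left _ _)
      · have hii : i = i₀ := Fin.ext (le_antisymm (Nat.lt_succ_iff.mp hij) hij')
        rw [hii]
        by_cases hmemI : i₀ ∈ I
        · exact le_trans (hIcap t ht i₀ hmemI) (le_trans (le_max_left _ _) (le_max_right _ _))
        · -- linear coordinate: invariance for -y
          have hy0i : y 0 i₀ ≤ B := by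
            have h1 := (abs_comp_le_norm (y 0) i₀).trans hy0
            rw [abs_le] at h1
            linarith [h1.2]
          have hkey : ∀ s ∈ Icc 0 b,
              min (-(y 0 i₀)) (-L0) - 1 ≤ -(y s i₀) → -(y s i₀) < min (-(y 0 i₀)) (-L0) →
              0 ≤ -(fRic I AV π AC (y s) w i₀) := by
            intro s hs _ hlt
            have hsi : L0 < y s i₀ := by
              have := lt_of_lt_of_le hlt (min_le_right _ _)
              linarith
            have hsum : ∑ k ∈ Finset.univ.filter (fun k => k < i₀),
                AV i₀ k * y s k ≤ SAV AV * M := by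
              apply sum_lt_upper AV hAVoff hM0 i₀
              intro k hk
              exact hind w hg y b hy hy0 hIcap s hs k (by
                have : (k : ℕ) < (i₀ : ℕ) := hk
                exact this)
            have hdiagmul : AV i₀ i₀ * y s i₀ < -c := by
              have hmul := mul_lt_mul_of_neg_left hsi ha
              have heq : AV i₀ i₀ * L0 = -c := by
                rw [hL0def]
                field_simp
                rw [mul_div_cancel_left₀ c ha.ne]
              rw [heq] at hmul
              exact hmul
            have hgl : gfun π AC w i₀ ≤ Γ := (abs_le.mp (hg i₀)).2
            rw [fRic, sum_filter_le_split (fun k => AV i₀ k * y s k) i₀, if_neg hmemI]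
            simp only [hc] at hdiagmul
            have : (1/2) * (y s i₀)^2 * (0:ℝ) = 0 := by ring
            rw [this]
            linarith
          have hinv := invariance_lemma (h := fun s => -(y s i₀))
            (φ := fun s => -(fRic I AV π AC (y s) w i₀)) (a := 0) (b := b)
            (L := min (-(y 0 i₀)) (-L0)) (L' := min (-(y 0 i₀)) (-L0) - 1) (by linarith)
            (fun s hs => ((hasDerivAt_pi.mp (hy s hs)) i₀).neg) hkey (min_le_left _ _) t ht
          have hmin : -(B + L0) ≤ min (-(y 0 i₀)) (-L0) :=
            le_min (by linarith) (by linarith)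
          have hfin : y t i₀ ≤ B + L0 + 1 := by
            linarith
          calc y t i₀ ≤ B + L0 + 1 := hfin
            _ ≤ max M (max R (B + c / (-AV i₀ i₀) + 1)) := by
                rw [hL0def] at *
                exact le_trans (le_max_right _ _) (le_max_right _ _)
    · refine ⟨M, hM0, fun w hg y b hy hy0 hIcap t ht i hij =>
        hind w hg y b hy hy0 hIcap t ht i (lt_of_lt_of_le i.isLt hjm)⟩

include hAVoff hAVdiag in
/-- Once an `I`-coordinate exceeds a large value `M`, the solution blows up within `8/M`. -/
lemma blowup_est {Γ B : ℝ} (hΓ : 0 ≤ Γ) (hB : 0 ≤ B) :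
    ∃ C : ℝ, 0 ≤ C ∧ ∀ (w : Fin n → ℝ), (∀ i, -Γ ≤ gfun π AC w i) →
      ∀ (y : ℝ → Fin m → ℝ) (b : ℝ),
      (∀ t ∈ Icc 0 b, HasDerivAt y (fRic I AV π AC (y t) w) t) →
      ‖y 0‖ ≤ B → ∀ i₀ ∈ I, ∀ t1 ∈ Icc 0 b, ∀ M : ℝ, 0 < M → 32 * C ≤ M^2 →
      M ≤ y t1 i₀ → b - t1 < 8 / M := by
  obtain ⟨β, hβ0, hβ⟩ := coord_lower I AV π AC hAVoff hAVdiag hΓ hB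
  have hS := SAV_nonneg AV
  refine ⟨SAV AV^2 + SAV AV * β + Γ, by positivity, ?_⟩
  intro w hg y b hy hy0 i₀ hi₀ t1 ht1 M hM hM2 hinit
  have habs : |AV i₀ i₀| ≤ SAV AV := by
    calc |AV i₀ i₀| ≤ ∑ k, |AV i₀ k| :=
          Finset.single_le_sum (f := fun k => |AV i₀ k|) (fun _ _ => abs_nonneg _)
            (Finset.mem_univ i₀)
      _ ≤ SAV AV := row_AV_le AV i₀
  have ha2 : (AV i₀ i₀)^2 ≤ SAV AV^2 := by
    have h1 := abs_le.mp habs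
    nlinarith [h1.1, h1.2]
  apply riccati_blowup (h := fun s => y s i₀)
    (φ := fun s => fRic I AV π AC (y s) w i₀) ht1.2 hM (by positivity) hM2 _ _ hinit
  · intro s hs
    exact (hasDerivAt_pi.mp (hy s ⟨le_trans ht1.1 hs.1, hs.2⟩)) i₀
  · intro s hs
    have hsIcc : s ∈ Icc 0 b := ⟨le_trans ht1.1 hs.1, hs.2⟩
    have hsum : -(SAV AV * β) ≤ ∑ k ∈ Finset.univ.filter (fun k => k < i₀),
        AV i₀ k * y s k := by
      apply sum_lt_lower AV hAVoff hβ0 i₀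
      intro k _
      exact hβ w hg y b hy hy0 s hsIcc k
    have hgl := hg i₀
    rw [fRic, sum_filter_le_split (fun k => AV i₀ k * y s k) i₀, if_pos hi₀]
    nlinarith [sq_nonneg (y s i₀ / 2 + AV i₀ i₀)]

end ODETools

/-- the blow-up time `u ↦ T*(u)` is continuous on
`𝒫 = {u ∈ ℝ^m × Ker A^D : T*(u) < ∞}`. -/
theorem stmt10 (m n : ℕ) (hm : 1 ≤ m)
    (I : Finset (Fin m)) (hI : I.Nonempty)
    (AV : Matrix (Fin m) (Fin m) ℝ)
    (hAVtri : ∀ i k : Fin m, i < k → AV i k = 0)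
    (hAVdiag : ∀ i : Fin m, AV i i < 0)
    (hAVoff : ∀ i k : Fin m, i ≠ k → 0 ≤ AV i k)
    (π : Fin m → Matrix (Fin n) (Fin n) ℝ)
    (hπ : ∀ i, (π i).PosSemidef)
    (AC : Matrix (Fin m) (Fin n) ℝ) (AD : Matrix (Fin n) (Fin n) ℝ)
    (Tstar : (Fin m → ℝ) → (Fin n → ℝ) → ℝ≥0∞)
    (hTstar : ∀ (v : Fin m → ℝ) (w : Fin n → ℝ), AD.mulVec w = 0 →
      ∃ y : ℝ → Fin m → ℝ, y 0 = v ∧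
        IsMaxSol (fun x => fRic I AV π AC x w) y (Tstar v w)) :
    ContinuousOn (fun p : (Fin m → ℝ) × (Fin n → ℝ) => (Tstar p.1 p.2).toReal)
      {p : (Fin m → ℝ) × (Fin n → ℝ) | AD.mulVec p.2 = 0 ∧ Tstar p.1 p.2 ≠ ⊤} := by
  have hS := SAV_nonneg AV
  have hG := GB_nonneg π AC
  intro p hp
  obtain ⟨v0, w0⟩ := p
  obtain ⟨hAD0, hTne⟩ := hp
  rw [Metric.continuousWithinAt_iff]
  intro ε hε
  simp only at hAD0 hTne ⊢
  obtain ⟨y0, hy00, hmax0⟩ := hTstar v0 w0 hAD0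
  have hT0pos : 0 < Tstar v0 w0 := hmax0.1
  have hb0pos : 0 < (Tstar v0 w0).toReal := ENNReal.toReal_pos hT0pos.ne' hTne
  set b0 : ℝ := (Tstar v0 w0).toReal with hb0def
  -- derivatives of y0 on [0, b0)
  have hdom : ∀ t, 0 ≤ t → t < b0 → HasDerivAt y0 (fRic I AV π AC (y0 t) w0) t := by
    intro t h1 h2
    exact hmax0.2.1 t h1 ((ENNReal.ofReal_lt_iff_lt_toReal h1 hTne).mpr h2)
  -- unboundedness of y0
  have hunbdd : ∀ Rb : ℝ, ∃ t, 0 ≤ t ∧ t < b0 ∧ Rb < ‖y0 t‖ := by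
    intro Rb
    by_contra hcon
    push_neg at hcon
    obtain ⟨z, hz0, b', hb', hz⟩ := sol_extend I AV π AC w0 hb0pos
      (le_max_right Rb 0)
      hdom
      (fun t h1 h2 => (hcon t h1 h2).trans (le_max_left _ _))
    have hb'pos : 0 < b' := hb0pos.trans hb'
    have hsol : SolOn (fun x => fRic I AV π AC x w0) z (ENNReal.ofReal b') := by
      intro t h1 h2
      exact hz t h1 ((ENNReal.ofReal_lt_ofReal_iff hb'pos).mp h2)
    have hTlt : Tstar v0 w0 < ENNReal.ofReal b' := by
      rw [← ENNReal.ofReal_toReal hTne]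
      exact (ENNReal.ofReal_lt_ofReal_iff hb'pos).mpr hb'
    exact hmax0.2.2 z (ENNReal.ofReal b') hTlt hsol hz0
  -- constants
  set W : ℝ := ‖w0‖ + 1 with hWdef
  have hWpos : 0 ≤ W := by positivity
  set Γ : ℝ := GB π AC * (1 + W)^2 with hΓdef
  have hΓ0 : 0 ≤ Γ := by positivity
  have hgb : ∀ w' : Fin n → ℝ, ‖w'‖ ≤ W → ∀ i, |gfun π AC w' i| ≤ Γ := by
    intro w' hw' i
    calc |gfun π AC w' i| ≤ GB π AC * (1 + ‖w'‖)^2 := gfun_bound π AC w' i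
      _ ≤ Γ := by
          apply mul_le_mul_of_nonneg_left _ hG
          nlinarith [norm_nonneg w']
  have hgb' : ∀ w' : Fin n → ℝ, ‖w'‖ ≤ W → ∀ i, -Γ ≤ gfun π AC w' i :=
    fun w' h i => (abs_le.mp (hgb w' h i)).1
  set B : ℝ := ‖v0‖ + 1 with hBdef
  have hB0 : 0 ≤ B := by positivity
  obtain ⟨C, hC0, hCest⟩ := blowup_est I AV π AC hAVoff hAVdiag hΓ0 hB0
  -- the small time increment e and the level RR
  set e : ℝ := min (ε/2) (min 1 (b0/2)) with hedef
  have he : 0 < e := lt_min (by linarith) (lt_min one_pos (by linarith))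
  have heε : e ≤ ε/2 := min_le_left _ _
  have heb : e ≤ b0/2 := le_trans (min_le_right _ _) (min_le_right _ _)
  set RR : ℝ := max (Real.sqrt (32*C)) (32/e) + 1 with hRRdef
  have hRRpos : 0 < RR := by
    have := Real.sqrt_nonneg (32*C)
    have := le_max_left (Real.sqrt (32*C)) (32/e)
    simp only [hRRdef]
    linarith
  have hRR2 : 32 * C ≤ RR^2 := by
    have h1 : Real.sqrt (32*C) ≤ RR := by
      simp only [hRRdef]
      linarith [le_max_left (Real.sqrt (32*C)) (32/e)]
    have h2 := Real.sq_sqrt (by positivity : (0:ℝ) ≤ 32*C)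
    nlinarith [Real.sqrt_nonneg (32*C)]
  have hRRe : 8 / RR ≤ e / 4 := by
    have h32 : 32 / e ≤ RR := by
      simp only [hRRdef]
      linarith [le_max_right (Real.sqrt (32*C)) (32/e)]
    have h33 : 32 ≤ e * RR := by
      rw [div_le_iff₀ he] at h32
      linarith [h32]
    rw [div_le_div_iff₀ hRRpos (by norm_num : (0:ℝ) < 4)]
    nlinarith
  -- find a time where some I-coordinate of y0 is large
  have hbig : ∃ t1, 0 ≤ t1 ∧ t1 < b0 ∧ ∃ i₀ ∈ I, RR + 1 ≤ y0 t1 i₀ := by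
    by_contra hcon
    push_neg at hcon
    obtain ⟨M, hM0, hMb⟩ := coord_upper I AV π AC hAVoff hAVdiag (Γ := Γ) (B := B)
      (R := RR+1) hΓ0 hB0 (by linarith)
    obtain ⟨β, hβ0, hβb⟩ := coord_lower I AV π AC hAVoff hAVdiag (Γ := Γ) (B := B) hΓ0 hB0
    obtain ⟨t, ht0, htb, htR⟩ := hunbdd (max M β)
    have hw0W : ‖w0‖ ≤ W := by simp only [hWdef]; linarith
    have hy0B : ‖y0 0‖ ≤ B := by rw [hy00]; simp only [hBdef]; linarith
    have hder : ∀ s ∈ Icc 0 t, HasDerivAt y0 (fRic I AV π AC (y0 s) w0) s :=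
      fun s hs => hdom s hs.1 (lt_of_le_of_lt hs.2 htb)
    have hbound : ‖y0 t‖ ≤ max M β := by
      rw [pi_norm_le_iff_of_nonneg (le_trans hM0 (le_max_left _ _))]
      intro i
      rw [Real.norm_eq_abs, abs_le]
      constructor
      · have h1 := hβb w0 (hgb' w0 hw0W) y0 t hder hy0B t ⟨ht0, le_rfl⟩ i
        have h2 : -(max M β) ≤ -β := neg_le_neg (le_max_right _ _)
        linarith
      · have h1 := hMb w0 (hgb w0 hw0W) y0 t hder hy0B
          (fun s hs i hi => (hcon s hs.1 (lt_of_le_of_lt hs.2 htb) i hi).le)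
          t ⟨ht0, le_rfl⟩ i
        exact h1.trans (le_max_left _ _)
    linarith
  obtain ⟨t1, ht10, ht1b, i₀, hi₀, hbig1⟩ := hbig
  -- lower semicontinuity helper
  have hlsc : ∀ bb : ℝ, 0 < bb → bb < b0 → ∃ δ : ℝ, 0 < δ ∧ ∀ v' w',
      AD.mulVec w' = 0 → ‖v' - v0‖ < δ → ‖w' - w0‖ < δ →
      ENNReal.ofReal bb ≤ Tstar v' w' := by
    intro bb hbb0 hbbb
    have hcont : ContinuousOn y0 (Icc 0 bb) := fun s hs =>
      (hdom s hs.1 (lt_of_le_of_lt hs.2 hbbb)).continuousAt.continuousWithinAt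
    obtain ⟨R0, hR0⟩ := isCompact_Icc.exists_bound_of_continuousOn hcont
    obtain ⟨δ, hδpos, hδ⟩ := tube I AV π AC w0 (b := bb) (R := max R0 0) hbb0.le
      (le_max_right _ _)
      (fun s hs => hdom s hs.1 (lt_of_le_of_lt hs.2 hbbb))
      (fun s hs => (hR0 s hs).trans (le_max_left _ _)) one_pos le_rfl
    refine ⟨δ, hδpos, ?_⟩
    intro v' w' hAD' hv' hw'
    obtain ⟨z, hz0, hz⟩ := hδ v' w' (by rw [hy00]; exact hv') hw'
    by_contra hcontra
    push_neg at hcontra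
    obtain ⟨y', hy'0, hmax'⟩ := hTstar v' w' hAD'
    have hsol : SolOn (fun x => fRic I AV π AC x w') z (ENNReal.ofReal bb) := by
      intro t h1 h2
      exact (hz t ⟨h1, ((ENNReal.ofReal_lt_ofReal_iff hbb0).mp h2).le⟩).1
    exact hmax'.2.2 z (ENNReal.ofReal bb) hcontra hsol (by rw [hz0, hy'0])
  -- tube at level t1m
  set t1m : ℝ := (t1 + b0)/2 with ht1mdef
  have ht1lt : t1 < t1m := by simp only [ht1mdef]; linarith
  have ht1mb : t1m < b0 := by simp only [ht1mdef]; linarith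
  have ht1m0 : 0 < t1m := by simp only [ht1mdef]; linarith
  have hcont1 : ContinuousOn y0 (Icc 0 t1m) := fun s hs =>
    (hdom s hs.1 (lt_of_le_of_lt hs.2 ht1mb)).continuousAt.continuousWithinAt
  obtain ⟨R1b, hR1b⟩ := isCompact_Icc.exists_bound_of_continuousOn hcont1
  obtain ⟨δ2, hδ2pos, hδ2⟩ := tube I AV π AC w0 (b := t1m) (R := max R1b 0) ht1m0.le
    (le_max_right _ _)
    (fun s hs => hdom s hs.1 (lt_of_le_of_lt hs.2 ht1mb))
    (fun s hs => (hR1b s hs).trans (le_max_left _ _)) one_pos le_rfl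
  obtain ⟨δ3, hδ3pos, hδ3⟩ := hlsc t1m ht1m0 ht1mb
  obtain ⟨δ1, hδ1pos, hδ1⟩ := hlsc (b0 - e) (by linarith) (by linarith)
  refine ⟨min (min δ1 δ2) (min δ3 1), by positivity, ?_⟩
  intro x hx hxd
  obtain ⟨hADx, hTxne⟩ := hx
  have hd1 : ‖x.1 - v0‖ < min (min δ1 δ2) (min δ3 1) := by
    rw [← dist_eq_norm]
    exact lt_of_le_of_lt (le_max_left _ _) (by rwa [Prod.dist_eq] at hxd)
  have hd2 : ‖x.2 - w0‖ < min (min δ1 δ2) (min δ3 1) := by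
    rw [← dist_eq_norm]
    exact lt_of_le_of_lt (le_max_right _ _) (by rwa [Prod.dist_eq] at hxd)
  have hd2W : ‖x.2‖ ≤ W := by
    have h1 : ‖x.2 - w0‖ < 1 :=
      lt_of_lt_of_le hd2 (le_trans (min_le_right _ _) (min_le_right _ _))
    calc ‖x.2‖ = ‖w0 + (x.2 - w0)‖ := by ring_nf
      _ ≤ ‖w0‖ + ‖x.2 - w0‖ := norm_add_le _ _
      _ ≤ W := by simp only [hWdef]; linarith
  have hd1B : ‖x.1‖ ≤ B := by
    have h1 : ‖x.1 - v0‖ < 1 :=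
      lt_of_lt_of_le hd1 (le_trans (min_le_right _ _) (min_le_right _ _))
    calc ‖x.1‖ = ‖v0 + (x.1 - v0)‖ := by ring_nf
      _ ≤ ‖v0‖ + ‖x.1 - v0‖ := norm_add_le _ _
      _ ≤ B := by simp only [hBdef]; linarith
  -- lower bounds on Tstar x
  have hTlow : ENNReal.ofReal (b0 - e) ≤ Tstar x.1 x.2 :=
    hδ1 x.1 x.2 hADx (lt_of_lt_of_le hd1 (le_trans (min_le_left _ _) (min_le_left _ _)))
      (lt_of_lt_of_le hd2 (le_trans (min_le_left _ _) (min_le_left _ _)))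
  have hTmid : ENNReal.ofReal t1m ≤ Tstar x.1 x.2 :=
    hδ3 x.1 x.2 hADx (lt_of_lt_of_le hd1 (le_trans (min_le_right _ _) (min_le_left _ _)))
      (lt_of_lt_of_le hd2 (le_trans (min_le_right _ _) (min_le_left _ _)))
  -- the nearby solution on [0, t1m]
  obtain ⟨z', hz'0, hz'⟩ := hδ2 x.1 x.2
    (by rw [hy00]; exact lt_of_lt_of_le hd1 (le_trans (min_le_left _ _) (min_le_right _ _)))
    (lt_of_lt_of_le hd2 (le_trans (min_le_left _ _) (min_le_right _ _)))
  obtain ⟨y', hy'0, hmax'⟩ := hTstar x.1 x.2 hADx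
  -- y' = z' on [0, t1]
  have heqz : y' t1 = z' t1 := by
    have huniq := uniq_sol (G := fun v => fRic I AV π AC v x.2)
      (fRic_loclip I AV π AC x.2) (y := y') (z := z') (b := t1)
      (fun t ht => hmax'.2.1 t ht.1 (lt_of_le_of_lt (ENNReal.ofReal_le_ofReal ht.2)
        (lt_of_lt_of_le ((ENNReal.ofReal_lt_ofReal_iff ht1m0).mpr ht1lt) hTmid)))
      (fun t ht => (hz' t ⟨ht.1, le_trans ht.2 ht1lt.le⟩).1)
      (by rw [hy'0, hz'0])
    exact huniq ⟨ht10, le_rfl⟩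
  -- y' t1 i₀ is large
  have hbig' : RR ≤ y' t1 i₀ := by
    have h1 := (hz' t1 ⟨ht10, ht1lt.le⟩).2
    have h2 : |z' t1 i₀ - y0 t1 i₀| ≤ 1 := by
      have := abs_comp_le_norm (z' t1 - y0 t1) i₀
      simp only [Pi.sub_apply] at this
      linarith
    rw [heqz]
    have := abs_le.mp h2
    linarith [this.1]
  -- upper bound on Tstar x
  have hTup : (Tstar x.1 x.2).toReal ≤ t1 + 8/RR := by
    by_contra hcontra
    push_neg at hcontra
    have h8 : (0:ℝ) < 8/RR := by positivity
    have hder' : ∀ t ∈ Icc 0 (t1 + 8/RR),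
        HasDerivAt y' (fRic I AV π AC (y' t) x.2) t := by
      intro t ht
      exact hmax'.2.1 t ht.1 ((ENNReal.ofReal_lt_iff_lt_toReal ht.1 hTxne).mpr
        (lt_of_le_of_lt ht.2 hcontra))
    have hy'B : ‖y' 0‖ ≤ B := by rw [hy'0]; exact hd1B
    have := hCest x.2 (hgb' x.2 hd2W) y' (t1 + 8/RR) hder' hy'B i₀ hi₀ t1
      ⟨ht10, by linarith⟩ RR hRRpos hRR2 hbig'
    simp only [add_sub_cancel_left] at this
    linarith
  -- conclude
  have hTlowR : b0 - e ≤ (Tstar x.1 x.2).toReal := by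
    have := ENNReal.toReal_mono hTxne hTlow
    rwa [ENNReal.toReal_ofReal (by linarith)] at this
  rw [Real.dist_eq, abs_lt]
  constructor
  · have h1 : t1 + 8/RR < b0 + e/4 := by linarith
    linarith
  · linarith

end
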